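/- Let H = (V, E) be a countable, linear, k-uniform hypergraph that has property 𝒫₂. Then for every injective edge labeling φ : E → ℕ there exists an infinite increasing path in H, i.e., an infinite path whose edge sequence e₀e₁… satisfies φ(eᵢ) < φ(eᵢ₊₁) for all i ≥ 0. -/

import Mathlib

open Set Function

/-- A hypergraph on vertex type `V` is given by its edge family `E : Set (Set V)`.
`Uniform E k` says every edge has exactly `k` vertices. -/
def Uniform {V : Type*} (E : Set (Set V)) (k : ℕ) : Prop :=
  ∀ e ∈ E, e.Finite ∧ e.ncard = k

/-- A hypergraph is linear if any two distinct edges intersect in at most one vertex. -/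
def LinearHG {V : Type*} (E : Set (Set V)) : Prop :=
  ∀ e ∈ E, ∀ f ∈ E, e ≠ f → (e ∩ f).Subsingleton

/-- Property 𝒫ℓ: there is a nonempty `V'` such that every `v ∈ V'` belongs to infinitely
many edges `e` with `|V' ∩ e| ≥ ℓ`. -/
def PropP {V : Type*} (E : Set (Set V)) (l : ℕ) : Prop :=
  ∃ V' : Set V, V'.Nonempty ∧
    ∀ v ∈ V', {e | e ∈ E ∧ v ∈ e ∧ l ≤ (V' ∩ e).ncard}.Infinite

/-- Property 𝒫₂: there is a nonempty `V'` such that every `v ∈ V'` belongs to infinitely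
many edges `e` with `|V' ∩ e| ≥ 2`. -/
def PropP2 {V : Type*} (E : Set (Set V)) : Prop :=
  ∃ V' : Set V, V'.Nonempty ∧
    ∀ v ∈ V', {e | e ∈ E ∧ v ∈ e ∧ (V' ∩ e).Nontrivial}.Infinite

/-- Property 𝒫₂*: there is a nonempty `E' ⊆ E` such that for every `e ∈ E'` the set of
vertices of `e` also covered by some other edge of `E'` is infinite. -/
def PropP2Star {V : Type*} (E : Set (Set V)) : Prop :=
  ∃ E' : Set (Set V), E' ⊆ E ∧ E'.Nonempty ∧
    ∀ e ∈ E', {x | x ∈ e ∧ ∃ f ∈ E', f ≠ e ∧ x ∈ f}.Infinite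

/-- The edge family of the dual hypergraph: its vertices are the edges of `E`, and its
edges are the sets `v* = {e ∈ E : v ∈ e}` for `v : V`. -/
def dualEdges {V : Type*} (E : Set (Set V)) : Set (Set ↥E) :=
  {S | ∃ v : V, S = {e : ↥E | v ∈ (e : Set V)}}

/-- The edge family of a simple graph, viewed as a 2-uniform hypergraph. -/
def graphEdgeFamily {V : Type*} (G : SimpleGraph V) : Set (Set V) :=
  {s | ∃ a b, G.Adj a b ∧ s = ({a, b} : Set V)}

/-- The `i`-th edge `{v_{(k-1)i+1}, …, v_{(k-1)i+k}}` of the vertex sequence `v`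
(0-indexed: `v n` is the vertex `v_{n+1}`). -/
def pathEdge {V : Type*} (k : ℕ) (v : ℕ → V) (i : ℕ) : Set V :=
  (fun j => v ((k - 1) * i + j)) '' (Set.Iio k)

/-- An infinite path in a `k`-uniform hypergraph: a sequence of distinct vertices all of
whose consecutive `k`-blocks (overlapping in one vertex) are edges. -/
def IsInfPath {V : Type*} (E : Set (Set V)) (k : ℕ) (v : ℕ → V) : Prop :=
  Function.Injective v ∧ ∀ i, pathEdge k v i ∈ E

/-- An infinite β-path `v₁e₁v₂e₂…` (0-indexed: `v i`, `e i` are `v_{i+1}`, `e_{i+1}`):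
distinct vertices, distinct edges, and `vᵢ` belongs to `eᵢ₋₁` and `eᵢ` (with `e₀ = e₁`)
and to no other edge of the sequence. -/
structure IsInfBetaPath {V : Type*} (E : Set (Set V)) (v : ℕ → V) (e : ℕ → Set V) :
    Prop where
  vinj : Function.Injective v
  einj : Function.Injective e
  edges_mem : ∀ i, e i ∈ E
  mem_iff : ∀ i j, v i ∈ e j ↔ (j = i ∨ j + 1 = i)

/-- A finite β-path `v₁e₁v₂e₂…vₙeₙ` (0-indexed): distinct vertices, distinct edges, and
`vᵢ` belongs to `eᵢ₋₁` and `eᵢ` (with `e₀ = e₁`) and to no other edge of the sequence. -/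
def IsBetaPath {V : Type*} (E : Set (Set V)) {n : ℕ} (v : Fin n → V)
    (e : Fin n → Set V) : Prop :=
  Function.Injective v ∧ Function.Injective e ∧ (∀ i, e i ∈ E) ∧
    ∀ i j, v i ∈ e j ↔ ((j : ℕ) = (i : ℕ) ∨ (j : ℕ) + 1 = (i : ℕ))

/-- A β-cycle `e₁v₁e₂v₂…eₙvₙe₁` (0-indexed), `n ≥ 3`: distinct vertices, distinct edges,
and `vᵢ` belongs to `eᵢ` and `eᵢ₊₁` (cyclically) and to no other edge of the sequence. -/
def IsBetaCycle {V : Type*} (E : Set (Set V)) {n : ℕ} (v : Fin n → V)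
    (e : Fin n → Set V) : Prop :=
  3 ≤ n ∧ Function.Injective v ∧ Function.Injective e ∧ (∀ i, e i ∈ E) ∧
    ∀ i j, v i ∈ e j ↔ ((j : ℕ) = (i : ℕ) ∨ (j : ℕ) = ((i : ℕ) + 1) % n)

/-- The set of β-cycles of `E` involving the vertex `x`. -/
def BetaCyclesThroughVertex {V : Type*} (E : Set (Set V)) (x : V) :
    Set ((n : ℕ) × ((Fin n → V) × (Fin n → Set V))) :=
  {c | IsBetaCycle E c.2.1 c.2.2 ∧ ∃ i, c.2.1 i = x}

/-- The set of β-cycles of `E` involving the edge `f`. -/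
def BetaCyclesThroughEdge {V : Type*} (E : Set (Set V)) (f : Set V) :
    Set ((n : ℕ) × ((Fin n → V) × (Fin n → Set V))) :=
  {c | IsBetaCycle E c.2.1 c.2.2 ∧ ∃ i, c.2.2 i = f}

/-- `G` has a (nonempty) subgraph in which every vertex has infinite degree. -/
def HasInfDegSubgraph {V : Type*} (G : SimpleGraph V) : Prop :=
  ∃ G' : G.Subgraph, G'.verts.Nonempty ∧ ∀ v ∈ G'.verts, (G'.neighborSet v).Infinite

/-- `G` is a skeleton of the hypergraph with edge family `F`: it is generated by a set
`T ⊆ {(v, e) : v ∈ e ∈ F}` with all fibers `T_f` finite, its edges being the pairs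
`{v, w}` with `(v, e) ∈ T` and `w ∈ e`, `w ≠ v`. -/
def IsSkeleton {W : Type*} (F : Set (Set W)) (G : SimpleGraph W) : Prop :=
  ∃ T : Set (W × Set W),
    (∀ p ∈ T, p.1 ∈ p.2 ∧ p.2 ∈ F) ∧
    (∀ f ∈ F, {p ∈ T | p.2 = f}.Finite) ∧
    (∀ a b, G.Adj a b ↔
      a ≠ b ∧ ((∃ e, (a, e) ∈ T ∧ b ∈ e) ∨ (∃ e, (b, e) ∈ T ∧ a ∈ e)))

lemma key_lemma {V : Type*} (k : ℕ) (hk : 2 ≤ k) (E : Set (Set V))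
    (hunif : Uniform E k) (hlin : LinearHG E) (V' : Set V)
    (hV' : ∀ v ∈ V', {e | e ∈ E ∧ v ∈ e ∧ (V' ∩ e).Nontrivial}.Infinite)
    (φ : ↥E → ℕ) (hφ : Function.Injective φ)
    (U : Set V) (x : V) (hU : U.Finite) (hxU : x ∈ U) (hxV' : x ∈ V') (N : ℕ) :
    ∃ B : Fin k → V, ∃ he : Set.range B ∈ E, Function.Injective B ∧
      B ⟨0, by omega⟩ = x ∧ B ⟨k - 1, by omega⟩ ∈ V' ∧ Set.range B ∩ U = {x} ∧
      N ≤ φ ⟨Set.range B, he⟩ := by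
  classical
  have hA := hV' x hxV'
  have hBad1 : {e : Set V | ∃ he : e ∈ E, φ ⟨e, he⟩ < N}.Finite := by
    have h2 : (φ ⁻¹' Set.Iio N).Finite := (Set.finite_Iio N).preimage hφ.injOn
    refine (h2.image Subtype.val).subset ?_
    rintro e ⟨he, hlt⟩
    exact ⟨⟨e, he⟩, hlt, rfl⟩
  have hBad2 : (⋃ u ∈ U \ {x}, {e | e ∈ E ∧ x ∈ e ∧ u ∈ e}).Finite := by
    refine Set.Finite.biUnion hU.diff ?_
    intro u hu
    apply Set.Subsingleton.finite
    intro e he f hf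
    by_contra hne
    have hsub := hlin e he.1 f hf.1 hne
    have : x = u := hsub ⟨he.2.1, hf.2.1⟩ ⟨he.2.2, hf.2.2⟩
    exact hu.2 this.symm
  obtain ⟨e, heA, heBad⟩ := (hA.diff (hBad1.union hBad2)).nonempty
  obtain ⟨he, hxe, hnt⟩ := heA
  have hφN : N ≤ φ ⟨e, he⟩ := by
    by_contra h
    exact heBad (Or.inl ⟨he, by omega⟩)
  have hcapU : e ∩ U ⊆ {x} := by
    rintro y ⟨hye, hyU⟩
    by_contra hyx
    exact heBad (Or.inr (Set.mem_biUnion ⟨hyU, hyx⟩ ⟨he, hxe, hye⟩))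
  obtain ⟨a, ⟨haV', hae⟩, b, ⟨hbV', hbe⟩, hab⟩ := hnt
  obtain ⟨w, hwV', hwe, hwx⟩ : ∃ w, w ∈ V' ∧ w ∈ e ∧ w ≠ x := by
    by_cases ha : a = x
    · exact ⟨b, hbV', hbe, fun h => hab (by rw [ha, h])⟩
    · exact ⟨a, haV', hae, ha⟩
  obtain ⟨hef, hcard⟩ := hunif e he
  have hcard' : hef.toFinset.card = k := by
    rw [← Set.ncard_eq_toFinset_card e hef]; exact hcard
  set q := Finset.equivFinOfCardEq hcard' with hq
  set g : Fin k → V := fun j => ((q.symm j : hef.toFinset) : V) with hg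
  have hginj : Function.Injective g := Subtype.val_injective.comp q.symm.injective
  have hgrange : Set.range g = e := by
    ext y; constructor
    · rintro ⟨j, rfl⟩; exact hef.mem_toFinset.mp (q.symm j).2
    · intro hy
      refine ⟨q ⟨y, hef.mem_toFinset.mpr hy⟩, ?_⟩
      rw [hg]; simp
  have hx' : x ∈ Set.range g := by rw [hgrange]; exact hxe
  obtain ⟨a0, ha0⟩ := hx'
  have hw' : w ∈ Set.range g := by rw [hgrange]; exact hwe
  obtain ⟨b0, hb0⟩ := hw'
  have hne0 : a0 ≠ b0 := by
    intro h; apply hwx; rw [← hb0, ← h, ha0]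
  have hklt : k - 1 < k := by omega
  have h0lt : 0 < k := by omega
  set z : Fin k := ⟨0, h0lt⟩ with hzdef
  set lst : Fin k := ⟨k - 1, hklt⟩ with hlstdef
  set ρ := Equiv.swap z a0 with hρ
  set c := ρ b0 with hc
  have hcz : c ≠ z := by
    intro h
    apply hne0
    have : ρ c = ρ z := by rw [h]
    rw [hc, Equiv.swap_apply_self, Equiv.swap_apply_left] at this
    exact this.symm
  have hzlst : z ≠ lst := by
    rw [hzdef, hlstdef]
    intro h
    have := congrArg Fin.val h
    simp at this; omega
  set τ : Fin k ≃ Fin k := (Equiv.swap lst c).trans ρ with hτ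
  have hτ0 : τ z = a0 := by
    rw [hτ]
    simp only [Equiv.trans_apply]
    rw [Equiv.swap_apply_of_ne_of_ne hzlst (Ne.symm hcz), hρ, Equiv.swap_apply_left]
  have hτl : τ lst = b0 := by
    rw [hτ]
    simp only [Equiv.trans_apply]
    rw [Equiv.swap_apply_left, hc, Equiv.swap_apply_self]
  have hr : Set.range (g ∘ ⇑τ) = e := by
    rw [τ.surjective.range_comp]; exact hgrange
  have he' : Set.range (g ∘ ⇑τ) ∈ E := by rw [hr]; exact he
  refine ⟨g ∘ ⇑τ, he', hginj.comp τ.injective, ?_, ?_, ?_, ?_⟩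
  · show g (τ ⟨0, _⟩) = x
    have : (⟨0, by omega⟩ : Fin k) = z := rfl
    rw [this, hτ0, ha0]
  · show g (τ ⟨k - 1, _⟩) ∈ V'
    have : (⟨k - 1, by omega⟩ : Fin k) = lst := rfl
    rw [this, hτl, hb0]; exact hwV'
  · rw [hr]
    apply Set.Subset.antisymm hcapU
    intro y hy
    rw [Set.mem_singleton_iff] at hy
    subst hy
    exact ⟨hxe, hxU⟩
  · have : (⟨Set.range (g ∘ ⇑τ), he'⟩ : ↥E) = ⟨e, he⟩ := Subtype.ext hr
    rw [this]; exact hφN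

/-- If a countable linear `k`-uniform hypergraph has property 𝒫₂, then every
injective edge labeling admits an infinite increasing path. -/
theorem stmt_4 {V : Type*} [Countable V] (k : ℕ) (hk : 2 ≤ k) (E : Set (Set V))
    (hunif : Uniform E k) (hlin : LinearHG E) (hP2 : PropP2 E) :
    ∀ φ : ↥E → ℕ, Function.Injective φ →
      ∃ v : ℕ → V, Function.Injective v ∧
        ∃ he : ∀ i, pathEdge k v i ∈ E,
          ∀ i, φ ⟨pathEdge k v i, he i⟩ < φ ⟨pathEdge k v (i + 1), he (i + 1)⟩ := by
  intro φ hφ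
  classical
  obtain ⟨V', hV'ne, hV'⟩ := hP2
  obtain ⟨x₀, hx₀⟩ := hV'ne
  have hk1 : k - 1 < k := by omega
  have h0k : 0 < k := by omega
  have hm : 0 < k - 1 := by omega
  set z : Fin k := ⟨0, h0k⟩ with hzdef
  set lst : Fin k := ⟨k - 1, hk1⟩ with hlstdef
  set Good : (Fin k → V) × Set V → Prop := fun p =>
    Function.Injective p.1 ∧ Set.range p.1 ∈ E ∧ p.1 lst ∈ V' ∧ p.2.Finite ∧
      Set.range p.1 ⊆ p.2 with hGoodDef
  have step : ∀ p, Good p → ∃ q : (Fin k → V) × Set V, Good q ∧ q.1 z = p.1 lst ∧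
      Set.range q.1 ∩ p.2 = {p.1 lst} ∧ q.2 = p.2 ∪ Set.range q.1 ∧
      ∀ (h1 : Set.range p.1 ∈ E) (h2 : Set.range q.1 ∈ E),
        φ ⟨Set.range p.1, h1⟩ < φ ⟨Set.range q.1, h2⟩ := by
    rintro p ⟨hinj, he, hlst', hfin, hsub⟩
    obtain ⟨B, heB, hBinj, hB0, hBlast, hBcap, hBφ⟩ :=
      key_lemma k hk E hunif hlin V' hV' φ hφ p.2 (p.1 lst) hfin (hsub ⟨lst, rfl⟩)
        hlst' (φ ⟨Set.range p.1, he⟩ + 1)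
    refine ⟨(B, p.2 ∪ Set.range B),
      ⟨hBinj, heB, hBlast, hfin.union (Set.finite_range B), Set.subset_union_right⟩,
      hB0, hBcap, rfl, ?_⟩
    intro h1 h2
    exact Nat.lt_of_succ_le hBφ
  choose! next hGood hz0 hcap hUeq hφlt using step
  obtain ⟨B0, he0, hinj0, hB00, hlast0, hcap0, -⟩ :=
    key_lemma k hk E hunif hlin V' hV' φ hφ {x₀} x₀ (Set.finite_singleton x₀) rfl hx₀ 0
  set p0 : (Fin k → V) × Set V := (B0, Set.range B0) with hp0
  have good0 : Good p0 := ⟨hinj0, he0, hlast0, Set.finite_range B0, subset_rfl⟩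
  have hGoodSeq : ∀ i, Good (next^[i] p0) := by
    intro i; induction i with
    | zero => exact good0
    | succ n ih => rw [Function.iterate_succ_apply']; exact hGood _ ih
  have hstep : ∀ i, (next^[i + 1] p0).1 z = (next^[i] p0).1 lst ∧
      Set.range (next^[i + 1] p0).1 ∩ (next^[i] p0).2 = {(next^[i] p0).1 lst} ∧
      (next^[i + 1] p0).2 = (next^[i] p0).2 ∪ Set.range (next^[i + 1] p0).1 ∧
      ∀ (h1 : Set.range (next^[i] p0).1 ∈ E) (h2 : Set.range (next^[i + 1] p0).1 ∈ E),
        φ ⟨_, h1⟩ < φ ⟨_, h2⟩ := by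
    intro i
    rw [Function.iterate_succ_apply']
    exact ⟨hz0 _ (hGoodSeq i), hcap _ (hGoodSeq i), hUeq _ (hGoodSeq i), hφlt _ (hGoodSeq i)⟩
  set v : ℕ → V := fun n =>
    (next^[n / (k - 1)] p0).1 ⟨n % (k - 1), (Nat.mod_lt n hm).trans_le (Nat.sub_le k 1)⟩
    with hvdef
  have hveq : ∀ n i j (hj : j < k), n / (k - 1) = i → n % (k - 1) = j →
      v n = (next^[i] p0).1 ⟨j, hj⟩ := by
    intro n i j hj h1 h2
    subst h1; subst h2
    rfl
  have hblock : ∀ i j (hj : j < k), v ((k - 1) * i + j) = (next^[i] p0).1 ⟨j, hj⟩ := by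
    intro i j hj
    by_cases hjm : j < k - 1
    · apply hveq
      · rw [Nat.mul_add_div hm, Nat.div_eq_of_lt hjm]; omega
      · rw [Nat.mul_add_mod, Nat.mod_eq_of_lt hjm]

    · have hj' : j = k - 1 := by omega
      subst hj'
      have hn : (k - 1) * i + (k - 1) = (k - 1) * (i + 1) := by ring
      rw [hn]
      have h1 : ((k - 1) * (i + 1)) / (k - 1) = i + 1 := Nat.mul_div_cancel_left _ hm
      have h2 : ((k - 1) * (i + 1)) % (k - 1) = 0 := Nat.mul_mod_right _ _
      rw [hveq _ (i + 1) 0 h0k h1 h2]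
      exact (hstep i).1
  have hpe : ∀ i, pathEdge k v i = Set.range (next^[i] p0).1 := by
    intro i
    ext y
    simp only [pathEdge, Set.mem_image, Set.mem_Iio, Set.mem_range]
    constructor
    · rintro ⟨j, hj, rfl⟩; exact ⟨⟨j, hj⟩, (hblock i j hj).symm⟩
    · rintro ⟨⟨j, hj⟩, rfl⟩; exact ⟨j, hj, hblock i j hj⟩
  have hE : ∀ i, pathEdge k v i ∈ E := by
    intro i; rw [hpe i]; exact (hGoodSeq i).2.1
  have hUmono : ∀ i j, i ≤ j → (next^[i] p0).2 ⊆ (next^[j] p0).2 := by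
    intro i j hij
    induction j, hij using Nat.le_induction with
    | base => exact subset_rfl
    | succ n hn ih =>
      refine ih.trans ?_
      rw [(hstep n).2.2.1]
      exact Set.subset_union_left
  have claimD : ∀ i j (r : Fin k), i < j → (next^[j] p0).1 r ∈ (next^[i] p0).2 → r = z := by
    intro i j r hij hmem
    obtain ⟨j', rfl⟩ : ∃ j', j = j' + 1 := ⟨j - 1, by omega⟩
    have h1 : (next^[j' + 1] p0).1 r ∈
        Set.range (next^[j' + 1] p0).1 ∩ (next^[j'] p0).2 :=
      ⟨⟨r, rfl⟩, hUmono i j' (by omega) hmem⟩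
    rw [(hstep j').2.1, Set.mem_singleton_iff] at h1
    have h2 : (next^[j' + 1] p0).1 r = (next^[j' + 1] p0).1 z := by
      rw [h1, (hstep j').1]
    exact (hGoodSeq (j' + 1)).1 h2
  have hvinj : Function.Injective v := by
    suffices H : ∀ n n', n ≤ n' → v n = v n' → n = n' by
      intro n n' h
      rcases le_total n n' with h' | h'
      · exact H n n' h' h
      · exact (H n' n h' h.symm).symm
    intro n n' hle heq
    have pf1 : n % (k - 1) < k := (Nat.mod_lt n hm).trans_le (Nat.sub_le k 1)
    have pf2 : n' % (k - 1) < k := (Nat.mod_lt n' hm).trans_le (Nat.sub_le k 1)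
    have e1 : v n = (next^[n / (k - 1)] p0).1 ⟨n % (k - 1), pf1⟩ := hveq _ _ _ _ rfl rfl
    have e2 : v n' = (next^[n' / (k - 1)] p0).1 ⟨n' % (k - 1), pf2⟩ := hveq _ _ _ _ rfl rfl
    have d1 := Nat.div_add_mod n (k - 1)
    have d2 := Nat.div_add_mod n' (k - 1)
    have hrlt : n % (k - 1) < k - 1 := Nat.mod_lt n hm
    have hrlt' : n' % (k - 1) < k - 1 := Nat.mod_lt n' hm
    have hi : n / (k - 1) ≤ n' / (k - 1) := Nat.div_le_div_right hle
    rcases eq_or_lt_of_le hi with hii | hii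
    · have hfe : ((⟨n % (k - 1), pf1⟩ : Fin k)) = ⟨n' % (k - 1), pf2⟩ := by
        apply (hGoodSeq (n / (k - 1))).1
        rw [← e1, heq, e2, hii]
      have := congrArg Fin.val hfe
      simp only at this
      calc n = (k - 1) * (n / (k - 1)) + n % (k - 1) := d1.symm
        _ = (k - 1) * (n' / (k - 1)) + n' % (k - 1) := by rw [hii, this]
        _ = n' := d2
    · exfalso
      have hmem : (next^[n' / (k - 1)] p0).1 ⟨n' % (k - 1), pf2⟩ ∈ (next^[n / (k - 1)] p0).2 := by
        rw [← e2, ← heq, e1]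
        exact (hGoodSeq _).2.2.2.2 ⟨_, rfl⟩
      have hr0 : (⟨n' % (k - 1), pf2⟩ : Fin k) = z := claimD _ _ _ hii hmem
      have hpos : 0 < n' / (k - 1) := Nat.lt_of_le_of_lt (Nat.zero_le _) hii
      obtain ⟨j', hj'⟩ : ∃ j', n' / (k - 1) = j' + 1 :=
        ⟨n' / (k - 1) - 1, (Nat.succ_pred_eq_of_pos hpos).symm⟩
      rw [hj'] at hmem e2
      have e3 : (next^[j' + 1] p0).1 z = (next^[j'] p0).1 lst := (hstep j').1
      have e4 : v n' = (next^[j'] p0).1 lst := by rw [e2, hr0, e3]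
      have hij' : n / (k - 1) ≤ j' := by omega
      rcases eq_or_lt_of_le hij' with h4 | h4
      · have hfe : ((⟨n % (k - 1), pf1⟩ : Fin k)) = lst := by
          apply (hGoodSeq (n / (k - 1))).1
          rw [← e1, heq, e4, h4]
        have := congrArg Fin.val hfe
        rw [hlstdef] at this
        simp only at this
        omega
      · have hmem2 : (next^[j'] p0).1 lst ∈ (next^[n / (k - 1)] p0).2 := by
          rw [← e4, ← heq, e1]
          exact (hGoodSeq _).2.2.2.2 ⟨_, rfl⟩
        have := claimD _ _ _ h4 hmem2
        rw [hlstdef, hzdef] at this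
        have := congrArg Fin.val this
        simp only at this
        omega
  refine ⟨v, hvinj, hE, ?_⟩
  intro i
  have h4 := (hstep i).2.2.2
  have q1 : (⟨pathEdge k v i, hE i⟩ : ↥E) =
      ⟨Set.range (next^[i] p0).1, (hGoodSeq i).2.1⟩ := Subtype.ext (hpe i)
  have q2 : (⟨pathEdge k v (i + 1), hE (i + 1)⟩ : ↥E) =
      ⟨Set.range (next^[i + 1] p0).1, (hGoodSeq (i + 1)).2.1⟩ := Subtype.ext (hpe (i + 1))
  rw [q1, q2]
  exact h4 _ _
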